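/- Let (A,σ) be a difference ring, let λ > 1 be an integer, let α be a unit of A with α^λ = 1, and let A[y] be the A-extension of order λ with σ(y) = α·y. Then const(A[y],σ) = const(A,σ) (i.e., every f ∈ A[y] with σ(f) = f is the image of an element of const(A,σ)) if and only if there are no g ∈ A with g ≠ 0 and integer m with 1 ≤ m ≤ λ−1 such that σ(g) = α^m·g. -/

import Mathlib

open Polynomial

/-- Let `(A,σ)` be a difference ring, `λ > 1`, `α` a unit of `A` with
`α^λ = 1`, and `A[y] = A[z]/⟨z^λ - 1⟩` the A-extension of order `λ` with `σ(y) = α·y`.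
Then `const(A[y],σ) = const(A,σ)` iff there are no `g ∈ A \ {0}` and `1 ≤ m ≤ λ−1`
with `σ(g) = α^m·g`. -/
theorem stmt2 {A : Type*} [CommRing A] [Algebra ℚ A]
    (σ : A ≃+* A) (lam : ℕ) (hlam : 1 < lam)
    (α : A) (hαu : IsUnit α) (hord : α ^ lam = 1)
    (π : Polynomial A →+*
        (Polynomial A ⧸ Ideal.span {(Polynomial.X : Polynomial A) ^ lam - 1}))
    (hπ : π = Ideal.Quotient.mk (Ideal.span {(Polynomial.X : Polynomial A) ^ lam - 1}))
    (σ' : (Polynomial A ⧸ Ideal.span {(Polynomial.X : Polynomial A) ^ lam - 1}) ≃+*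
        (Polynomial A ⧸ Ideal.span {(Polynomial.X : Polynomial A) ^ lam - 1}))
    (hC : ∀ a : A, σ' (π (Polynomial.C a)) = π (Polynomial.C (σ a)))
    (hY : σ' (π Polynomial.X) = π (Polynomial.C α * Polynomial.X)) :
    (∀ f, σ' f = f → ∃ c : A, σ c = c ∧ f = π (Polynomial.C c)) ↔
      ¬ ∃ (g : A) (m : ℕ), g ≠ 0 ∧ 1 ≤ m ∧ m ≤ lam - 1 ∧ σ g = α ^ m * g := by
  -- trivial case: A is a subsingleton
  rcases subsingleton_or_nontrivial A with hA | hA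
  · have hsub : Subsingleton (Polynomial A ⧸ Ideal.span {(X : Polynomial A) ^ lam - 1}) :=
      (Ideal.Quotient.mk_surjective).subsingleton
    constructor
    · rintro - ⟨g, m, hg, -⟩; exact hg (Subsingleton.elim _ _)
    · intro _ f _
      exact ⟨0, by simp, Subsingleton.elim _ _⟩
  -- the substitution homomorphism S on polynomials
  set S : Polynomial A →+* Polynomial A :=
    eval₂RingHom ((C : A →+* Polynomial A).comp (σ : A →+* A)) (C α * X) with hSdef
  have hS : ∀ p : Polynomial A, σ' (π p) = π (S p) := by
    have key : (σ'.toRingHom).comp π = π.comp S := by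
      apply Polynomial.ringHom_ext
      · intro a
        simpa [hSdef] using hC a
      · simpa [hSdef] using hY
    intro p
    exact RingHom.congr_fun key p
  have hcoeff : ∀ (p : Polynomial A) (n : ℕ), (S p).coeff n = σ (p.coeff n) * α ^ n := by
    intro p
    induction p using Polynomial.induction_on' with
    | add p q hp hq =>
      intro n
      simp [hp, hq, add_mul]
    | monomial i a =>
      intro n
      simp only [hSdef, coe_eval₂RingHom, eval₂_monomial, RingHom.coe_comp, Function.comp_apply,
        RingEquiv.coe_toRingHom, mul_pow, ← C_pow, coeff_monomial]
      rw [← mul_assoc, ← C_mul, coeff_C_mul, coeff_X_pow]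
      by_cases h : i = n
      · subst h; simp
      · simp [h, Ne.symm h]
  have hmonic : (X ^ lam - 1 : Polynomial A).Monic := by
    have := monic_X_pow_sub_C (1 : A) (n := lam) (by omega)
    simpa using this
  have hdegq : (X ^ lam - 1 : Polynomial A).degree = (lam : ℕ) := by
    have := degree_X_pow_sub_C (R := A) (n := lam) (by omega) 1
    simpa using this
  -- any nonzero element of the ideal has natDegree ≥ lam
  have hdeg : ∀ p : Polynomial A, p ≠ 0 →
      (X ^ lam - 1 : Polynomial A) ∣ p → lam ≤ p.natDegree := by
    rintro p hp ⟨r, rfl⟩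
    have hr : r ≠ 0 := by rintro rfl; simp at hp
    have hlc : (X ^ lam - 1 : Polynomial A).leadingCoeff * r.leadingCoeff ≠ 0 := by
      rw [hmonic.leadingCoeff, one_mul]
      exact leadingCoeff_ne_zero.mpr hr
    rw [natDegree_mul' hlc]
    have : (X ^ lam - 1 : Polynomial A).natDegree = lam := natDegree_X_pow_sub_C
    omega
  have hzero : ∀ p : Polynomial A, π p = 0 ↔ (X ^ lam - 1 : Polynomial A) ∣ p := by
    intro p
    rw [hπ, Ideal.Quotient.eq_zero_iff_mem, Ideal.mem_span_singleton]
  constructor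
  · -- forward
    intro hconst
    rintro ⟨g, m, hg, hm1, hm2, hσg⟩
    obtain ⟨k, hkm, hk1, hk2⟩ : ∃ k, m + k = lam ∧ 1 ≤ k ∧ k ≤ lam - 1 :=
      ⟨lam - m, by omega, by omega, by omega⟩
    have hfix : σ' (π (C g * X ^ k)) = π (C g * X ^ k) := by
      rw [hS]
      congr 1
      have h1 : S (C g * X ^ k) = C (σ g * α ^ k) * X ^ k := by
        simp only [hSdef, coe_eval₂RingHom, eval₂_mul, eval₂_C, eval₂_X_pow, RingHom.coe_comp,
          Function.comp_apply, RingEquiv.coe_toRingHom, mul_pow, ← C_pow]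
        rw [C_mul]; ring
      have h2 : σ g * α ^ k = g := by
        rw [hσg, mul_assoc, mul_comm g, ← mul_assoc, ← pow_add, hkm, hord, one_mul]
      rw [h1, h2]
    obtain ⟨c, _, hfc⟩ := hconst _ hfix
    have hdvd : (X ^ lam - 1 : Polynomial A) ∣ (C g * X ^ k - C c) := by
      rw [← hzero, map_sub, sub_eq_zero, ← hfc]
    have hne : (C g * X ^ k - C c : Polynomial A) ≠ 0 := by
      intro h
      have hck : (C g * X ^ k - C c : Polynomial A).coeff k = g := by
        rw [coeff_sub, coeff_C_mul, coeff_X_pow, coeff_C, if_pos rfl, if_neg (by omega),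
          mul_one, sub_zero]
      rw [h, coeff_zero] at hck
      exact hg hck.symm
    have hle : lam ≤ (C g * X ^ k - C c : Polynomial A).natDegree := hdeg _ hne hdvd
    have hbound : (C g * X ^ k - C c : Polynomial A).natDegree ≤ k := by
      refine le_trans (natDegree_sub_le _ _) ?_
      simp only [natDegree_C, max_le_iff]
      constructor
      · exact le_trans (natDegree_C_mul_le _ _) (by simp)
      · omega
    omega
  · -- backward
    intro hno f hf
    obtain ⟨p, rfl⟩ : ∃ p, π p = f := by
      rw [hπ]; exact Ideal.Quotient.mk_surjective f
    set r := p %ₘ (X ^ lam - 1) with hr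
    have hπr : π p = π r := by
      have hmd := modByMonic_add_div p (X ^ lam - 1)
      have : π p = π (r + (X ^ lam - 1) * (p /ₘ (X ^ lam - 1))) := by rw [hmd]
      rw [this, map_add, map_mul]
      have : π (X ^ lam - 1 : Polynomial A) = 0 := (hzero _).mpr dvd_rfl
      rw [this, zero_mul, add_zero]
    have hrdeg : r.degree < (lam : ℕ) := by
      have := degree_modByMonic_lt p hmonic
      rwa [hdegq] at this
    have hrc : ∀ n, lam ≤ n → r.coeff n = 0 := by
      intro n hn
      exact coeff_eq_zero_of_degree_lt (lt_of_lt_of_le hrdeg (by exact_mod_cast Nat.cast_le.mpr hn))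
    -- S r = r
    have hSr : S r = r := by
      by_contra hne
      have hdvd : (X ^ lam - 1 : Polynomial A) ∣ (S r - r) := by
        rw [← hzero, map_sub, sub_eq_zero, ← hS, ← hπr, hf, hπr]
      have hle := hdeg _ (sub_ne_zero_of_ne hne) hdvd
      have hlead : (S r - r).coeff (S r - r).natDegree ≠ 0 :=
        leadingCoeff_ne_zero.mpr (sub_ne_zero_of_ne hne)
      apply hlead
      rw [coeff_sub, hcoeff, hrc _ hle]
      simp
    have hcoef : ∀ n, σ (r.coeff n) * α ^ n = r.coeff n := by
      intro n
      rw [← hcoeff, hSr]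
    -- middle coefficients vanish
    have hmid : ∀ i, 1 ≤ i → i ≤ lam - 1 → r.coeff i = 0 := by
      intro i h1 h2
      by_contra hgi
      apply hno
      refine ⟨r.coeff i, lam - i, hgi, by omega, by omega, ?_⟩
      have h3 := hcoef i
      have : σ (r.coeff i) * α ^ i * α ^ (lam - i) = r.coeff i * α ^ (lam - i) := by
        rw [h3]
      rw [mul_assoc, ← pow_add, show i + (lam - i) = lam by omega, hord, mul_one] at this
      rw [this, mul_comm]
    have hc0 : σ (r.coeff 0) = r.coeff 0 := by
      have := hcoef 0
      simpa using this
    refine ⟨r.coeff 0, hc0, ?_⟩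
    rw [hπr]
    congr 1
    ext n
    rcases Nat.eq_zero_or_pos n with h | h
    · subst h; simp
    · rw [coeff_C, if_neg (by omega)]
      rcases le_or_gt lam n with h' | h'
      · exact hrc n h'
      · exact hmid n h (by omega)
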